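/- For every real ν ≥ 0 and every x > 0, the modified Bessel functions of the first kind satisfy I_ν(x) ≥ I_{ν+1}(x); consequently the ultraspherical modified Bessel functions satisfy i_l(x) ≥ i_{l+1}(x) for all l ∈ ℕ and x > 0. -/

import Mathlib

open Finset Filter

/-- The modified Bessel function of the first kind,
`I_ν(x) = Σ_{m=0}^∞ (x/2)^{2m+ν} / (m! Γ(m+ν+1))`. -/
noncomputable def besselI (ν : ℝ) (x : ℝ) : ℝ :=
  ∑' m : ℕ, (x / 2) ^ (2 * (m : ℝ) + ν) / (m.factorial * Real.Gamma (ν + m + 1))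

/-- The ultraspherical modified Bessel function `i_l(z) = z^{1−N/2} I_{N/2−1+l}(z)`. -/
noncomputable def ultraI (N : ℕ) (l : ℕ) (z : ℝ) : ℝ :=
  z ^ ((1 : ℝ) - N / 2) * besselI ((N : ℝ) / 2 - 1 + l) z

namespace BesselAux

noncomputable def aa (ν : ℝ) (m : ℕ) : ℝ := 1 / (m.factorial * Real.Gamma (ν + m + 1))

noncomputable def ff (ν : ℝ) (n : ℕ) : ℝ :=
  if Even n then aa ν (n / 2) else -(aa ν (n / 2) / (ν + (n / 2 : ℕ) + 1))

lemma gamma_pos {ν : ℝ} (hν : 0 ≤ ν) (m : ℕ) : 0 < Real.Gamma (ν + m + 1) :=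
  Real.Gamma_pos_of_pos (by positivity)

lemma aa_pos {ν : ℝ} (hν : 0 ≤ ν) (m : ℕ) : 0 < aa ν m := by
  have h1 := gamma_pos hν m
  have h2 : (0 : ℝ) < m.factorial := by exact_mod_cast m.factorial_pos
  unfold aa; positivity

lemma gamma_succ {ν : ℝ} (hν : 0 ≤ ν) (m : ℕ) :
    Real.Gamma (ν + m + 2) = (ν + m + 1) * Real.Gamma (ν + m + 1) := by
  have h : ν + (m : ℝ) + 2 = (ν + m + 1) + 1 := by ring
  rw [h, Real.Gamma_add_one (by positivity)]

lemma aa_succ {ν : ℝ} (hν : 0 ≤ ν) (m : ℕ) :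
    aa ν (m + 1) = aa ν m / ((m + 1) * (ν + m + 1)) := by
  have h1 := gamma_pos hν m
  have h2 : (0 : ℝ) < m.factorial := by exact_mod_cast m.factorial_pos
  have harg : ν + ((m : ℕ) + 1 : ℕ) + 1 = ν + m + 2 := by push_cast; ring
  rw [aa, harg, gamma_succ hν m, Nat.factorial_succ, aa]
  push_cast
  field_simp

lemma ff_even (ν : ℝ) (m : ℕ) : ff ν (2 * m) = aa ν m := by
  rw [ff, if_pos ⟨m, two_mul m⟩]
  congr 1
  omega

lemma ff_odd (ν : ℝ) (m : ℕ) : ff ν (2 * m + 1) = -(aa ν m / (ν + m + 1)) := by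
  have hne : ¬ Even (2 * m + 1) := by simp [Nat.even_add_one, parity_simps]
  rw [ff, if_neg hne]
  have h : (2 * m + 1) / 2 = m := by omega
  rw [h]

lemma p_nonneg {ν : ℝ} (hν : 0 ≤ ν) (n : ℕ) :
    0 ≤ 2 * ff ν n + (n + 1) * ff ν (n + 1) := by
  rcases Nat.even_or_odd n with ⟨m, hm⟩ | ⟨m, hm⟩
  · have hm2 : n = 2 * m := by omega
    subst hm2
    rw [ff_even, show 2 * m + 1 = 2 * m + 1 from rfl, ff_odd]
    have hA := aa_pos hν m
    have hP : (0 : ℝ) < ν + m + 1 := by positivity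
    have key : 2 * aa ν m + ((2 * m : ℕ) + 1 : ℝ) * -(aa ν m / (ν + m + 1))
        = aa ν m * (2 * ν + 1) / (ν + m + 1) := by
      push_cast
      field_simp
      ring
    push_cast at key ⊢
    rw [key]
    positivity
  · subst hm
    rw [ff_odd, show 2 * m + 1 + 1 = 2 * (m + 1) from by ring, ff_even, aa_succ hν]
    have hA := aa_pos hν m
    have hP : (0 : ℝ) < ν + m + 1 := by positivity
    have key : 2 * -(aa ν m / (ν + m + 1))
        + ((2 * m + 1 : ℕ) + 1 : ℝ) * (aa ν m / ((m + 1) * (ν + m + 1))) = 0 := by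
      push_cast
      field_simp
      ring
    push_cast at key ⊢
    rw [key]

noncomputable def hh (ν : ℝ) (n : ℕ) : ℝ :=
  ∑ k ∈ range (n + 1), 2 ^ (n - k) * ff ν k / (n - k).factorial

lemma hh_rec (ν : ℝ) (n : ℕ) :
    ((n : ℝ) + 1) * hh ν (n + 1) =
      ∑ k ∈ range (n + 1),
        2 ^ (n - k) * (2 * ff ν k + (k + 1) * ff ν (k + 1)) / (n - k).factorial := by
  rw [hh, mul_sum]
  have split : ∀ k ∈ range (n + 2),
      ((n : ℝ) + 1) * (2 ^ (n + 1 - k) * ff ν k / (n + 1 - k).factorial)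
      = ((n + 1 - k : ℕ) : ℝ) * (2 ^ (n + 1 - k) * ff ν k / (n + 1 - k).factorial)
        + (k : ℝ) * (2 ^ (n + 1 - k) * ff ν k / (n + 1 - k).factorial) := by
    intro k hk
    rw [mem_range] at hk
    have : ((n + 1 - k : ℕ) : ℝ) = (n : ℝ) + 1 - k := by
      rw [Nat.cast_sub (by omega)]; push_cast; ring
    rw [this]; ring
  rw [sum_congr rfl split, sum_add_distrib]
  have hS1 : ∑ k ∈ range (n + 2),
      ((n + 1 - k : ℕ) : ℝ) * (2 ^ (n + 1 - k) * ff ν k / (n + 1 - k).factorial)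
      = ∑ k ∈ range (n + 1), 2 ^ (n - k) * (2 * ff ν k) / (n - k).factorial := by
    rw [sum_range_succ]
    simp only [Nat.sub_self, Nat.cast_zero, zero_mul, add_zero]
    refine sum_congr rfl fun k hk => ?_
    rw [mem_range] at hk
    have h1 : n + 1 - k = (n - k) + 1 := by omega
    rw [h1, Nat.factorial_succ]
    have h2 : (0 : ℝ) < (n - k).factorial := by exact_mod_cast (n - k).factorial_pos
    push_cast
    field_simp
    ring
  have hS2 : ∑ k ∈ range (n + 2),
      (k : ℝ) * (2 ^ (n + 1 - k) * ff ν k / (n + 1 - k).factorial)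
      = ∑ k ∈ range (n + 1), 2 ^ (n - k) * ((k + 1) * ff ν (k + 1)) / (n - k).factorial := by
    rw [sum_range_succ']
    simp only [Nat.cast_zero, zero_mul, add_zero]
    refine sum_congr rfl fun k hk => ?_
    rw [mem_range] at hk
    have h1 : n + 1 - (k + 1) = n - k := by omega
    rw [h1]
    push_cast
    ring
  rw [hS1, hS2, ← sum_add_distrib]
  refine sum_congr rfl fun k hk => ?_
  rw [← add_div]
  ring_nf
lemma hh_nonneg {ν : ℝ} (hν : 0 ≤ ν) (n : ℕ) : 0 ≤ hh ν n := by
  cases n with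
  | zero =>
      have h0 : ff ν 0 = aa ν 0 := by simpa using ff_even ν 0
      simp [hh, h0]
      exact (aa_pos hν 0).le
  | succ n =>
      have h1 : (0 : ℝ) < (n : ℝ) + 1 := by positivity
      have h2 : 0 ≤ ((n : ℝ) + 1) * hh ν (n + 1) := by
        rw [hh_rec]
        refine sum_nonneg fun k hk => ?_
        have hp := p_nonneg hν k
        have hf : (0 : ℝ) < (n - k).factorial := by exact_mod_cast (n - k).factorial_pos
        positivity
      by_contra hlt
      push_neg at hlt
      nlinarith

lemma summable_even {ν : ℝ} (hν : 0 ≤ ν) {s : ℝ} (hs : 0 < s) :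
    Summable fun m : ℕ => aa ν m * s ^ (2 * m) := by
  refine summable_of_ratio_norm_eventually_le (r := 1 / 2) (by norm_num) ?_
  filter_upwards [eventually_ge_atTop ⌈2 * s ^ 2⌉₊] with m hm
  have hA := aa_pos hν m
  have hA' := aa_pos hν (m + 1)
  have hP : (0 : ℝ) < ν + m + 1 := by positivity
  have hceil : 2 * s ^ 2 ≤ m := le_trans (Nat.le_ceil _) (by exact_mod_cast hm)
  rw [Real.norm_eq_abs, Real.norm_eq_abs, abs_of_pos (by positivity),
    abs_of_pos (by positivity), aa_succ hν]
  have hpow : s ^ (2 * (m + 1)) = s ^ (2 * m) * s ^ 2 := by ring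
  rw [hpow]
  rw [div_mul_eq_mul_div, div_le_iff₀ (by positivity)]
  have hT : (0 : ℝ) ≤ aa ν m * s ^ (2 * m) := by positivity
  have hs2 : s ^ 2 ≤ (m : ℝ) / 2 := by linarith
  have hmn : (0 : ℝ) ≤ (m : ℝ) := Nat.cast_nonneg m
  have hstep : ((m : ℝ) + 1) ≤ ((m : ℝ) + 1) * (ν + m + 1) := by nlinarith
  nlinarith [mul_le_mul_of_nonneg_left hs2 hT, mul_le_mul_of_nonneg_left hstep hT]

lemma summable_odd {ν : ℝ} (hν : 0 ≤ ν) {s : ℝ} (hs : 0 < s) :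
    Summable fun m : ℕ => aa ν m / (ν + m + 1) * s ^ (2 * m + 1) := by
  refine Summable.of_nonneg_of_le (fun m => ?_) (fun m => ?_)
    ((summable_even hν hs).mul_left s)
  · have hA := aa_pos hν m
    have hP : (0 : ℝ) < ν + m + 1 := by positivity
    positivity
  · have hA := aa_pos hν m
    have hP : (0 : ℝ) < ν + m + 1 := by positivity
    have h1 : (1 : ℝ) ≤ ν + m + 1 := by
      have : (0:ℝ) ≤ (m:ℝ) := Nat.cast_nonneg m
      linarith
    have hq : aa ν m / (ν + m + 1) ≤ aa ν m := by
      rw [div_le_iff₀ hP]; nlinarith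
    calc aa ν m / (ν + m + 1) * s ^ (2 * m + 1)
        ≤ aa ν m * s ^ (2 * m + 1) := by
          exact mul_le_mul_of_nonneg_right hq (by positivity)
      _ = s * (aa ν m * s ^ (2 * m)) := by ring

end BesselAux

open BesselAux in
/-- `I_ν(x) ≥ I_{ν+1}(x)` for `ν ≥ 0`, `x > 0`; consequently
`i_l(x) ≥ i_{l+1}(x)`. -/
theorem besselI_antitone (N : ℕ) (hN : 2 ≤ N) :
    (∀ ν : ℝ, 0 ≤ ν → ∀ x : ℝ, 0 < x → besselI (ν + 1) x ≤ besselI ν x) ∧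
    (∀ l : ℕ, ∀ x : ℝ, 0 < x → ultraI N (l + 1) x ≤ ultraI N l x) := by
  have main : ∀ ν : ℝ, 0 ≤ ν → ∀ x : ℝ, 0 < x → besselI (ν + 1) x ≤ besselI ν x := by
    intro ν hν x hx
    set s : ℝ := x / 2 with hs_def
    have hs : 0 < s := by positivity
    -- even and odd sums
    set A : ℝ := ∑' m : ℕ, aa ν m * s ^ (2 * m) with hA_def
    set B : ℝ := ∑' m : ℕ, aa ν m / (ν + m + 1) * s ^ (2 * m + 1) with hB_def
    have hAsum : HasSum (fun m : ℕ => aa ν m * s ^ (2 * m)) A :=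
      (summable_even hν hs).hasSum
    have hBsum : HasSum (fun m : ℕ => aa ν m / (ν + m + 1) * s ^ (2 * m + 1)) B :=
      (summable_odd hν hs).hasSum
    -- besselI ν x = s^ν * A
    have hbν : besselI ν x = s ^ ν * A := by
      rw [besselI, ← tsum_mul_left]
      refine tsum_congr fun m => ?_
      have hexp : s ^ (2 * (m : ℝ) + ν) = s ^ (2 * m : ℕ) * s ^ ν := by
        rw [← Real.rpow_natCast s (2 * m), ← Real.rpow_add hs]
        congr 1
        push_cast
        ring
      rw [hexp, aa]
      ring
    -- besselI (ν+1) x = s^ν * B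
    have hbν1 : besselI (ν + 1) x = s ^ ν * B := by
      rw [besselI, ← tsum_mul_left]
      refine tsum_congr fun m => ?_
      have hexp : s ^ (2 * (m : ℝ) + (ν + 1)) = s ^ (2 * m + 1 : ℕ) * s ^ ν := by
        rw [← Real.rpow_natCast s (2 * m + 1), ← Real.rpow_add hs]
        congr 1
        push_cast
        ring
      have hG : Real.Gamma (ν + 1 + m + 1) = (ν + m + 1) * Real.Gamma (ν + m + 1) := by
        have h : ν + 1 + (m : ℝ) + 1 = ν + m + 2 := by ring
        rw [h, gamma_succ hν]
      have hgp := gamma_pos hν m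
      have hfp : (0 : ℝ) < m.factorial := by exact_mod_cast m.factorial_pos
      have hP : (0 : ℝ) < ν + m + 1 := by positivity
      rw [hexp, hG, aa]
      field_simp
    -- combined series
    have hF : HasSum (fun n : ℕ => ff ν n * s ^ n) (A + -B) := by
      refine HasSum.even_add_odd ?_ ?_
      · convert hAsum using 2 with m
        rw [ff_even]
      · convert hBsum.neg using 2 with m
        · rfl
        rw [ff_odd]
        ring
    -- norm summability of the combined series
    have hFnorm : Summable fun n : ℕ => ‖ff ν n * s ^ n‖ := by
      refine Summable.even_add_odd ?_ ?_
      · refine ((summable_even hν hs).congr fun m => ?_)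
        rw [ff_even, Real.norm_eq_abs, abs_of_pos
          (mul_pos (aa_pos hν m) (pow_pos hs _))]
      · refine ((summable_odd hν hs).congr fun m => ?_)
        have hA := aa_pos hν m
        have hP : (0 : ℝ) < ν + m + 1 := by positivity
        rw [ff_odd, Real.norm_eq_abs, neg_mul, abs_neg, abs_of_pos (by positivity)]
    -- exp series
    have hexp_eq : Real.exp (2 * s) = ∑' n : ℕ, (2 * s) ^ n / n.factorial := by
      rw [Real.exp_eq_exp_ℝ, NormedSpace.exp_eq_tsum_div]
    have hexp_norm : Summable fun n : ℕ => ‖(2 * s) ^ n / n.factorial‖ := by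
      refine (Real.summable_pow_div_factorial |2 * s|).congr fun n => ?_
      rw [Real.norm_eq_abs, abs_div, abs_pow, Nat.abs_cast]
    -- Cauchy product
    have hcauchy : Real.exp (2 * s) * (A + -B) = ∑' n : ℕ, hh ν n * s ^ n := by
      rw [hexp_eq, ← hF.tsum_eq,
        tsum_mul_tsum_eq_tsum_sum_antidiagonal_of_summable_norm hexp_norm hFnorm]
      refine tsum_congr fun n => ?_
      rw [Finset.Nat.sum_antidiagonal_eq_sum_range_succ_mk]
      have hrefl : hh ν n = ∑ k ∈ range (n + 1),
          (2:ℝ) ^ k * ff ν (n - k) / (k.factorial : ℝ) := by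
        rw [hh, ← Finset.sum_range_reflect]
        refine Finset.sum_congr rfl fun k hk => ?_
        rw [mem_range] at hk
        have e1 : n + 1 - 1 - k = n - k := by omega
        have e2 : n - (n - k) = k := by omega
        rw [e1, e2]
      rw [hrefl, Finset.sum_mul]
      refine Finset.sum_congr rfl fun k hk => ?_
      rw [mem_range] at hk
      have h2 : s ^ k * s ^ (n - k) = s ^ n := by
        rw [← pow_add]; congr 1; omega
      rw [mul_pow]
      calc (2:ℝ) ^ k * s ^ k / k.factorial * (ff ν (n - k) * s ^ (n - k))
          = 2 ^ k * ff ν (n - k) / k.factorial * (s ^ k * s ^ (n - k)) := by ring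
        _ = 2 ^ k * ff ν (n - k) / k.factorial * s ^ n := by rw [h2]
    -- conclude
    have hH : 0 ≤ ∑' n : ℕ, hh ν n * s ^ n :=
      tsum_nonneg fun n => mul_nonneg (hh_nonneg hν n) (pow_nonneg hs.le n)
    have hAB : 0 ≤ A + -B := by
      by_contra hlt
      push_neg at hlt
      have hE := Real.exp_pos (2 * s)
      have : Real.exp (2 * s) * (A + -B) < 0 := mul_neg_of_pos_of_neg hE hlt
      rw [hcauchy] at this
      linarith
    rw [hbν, hbν1]
    have hBA : B ≤ A := by linarith
    exact mul_le_mul_of_nonneg_left hBA (Real.rpow_nonneg hs.le ν)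
  refine ⟨main, ?_⟩
  intro l x hx
  have hν : (0 : ℝ) ≤ (N : ℝ) / 2 - 1 + l := by
    have h2 : (2 : ℝ) ≤ N := by exact_mod_cast hN
    have : (0:ℝ) ≤ (l:ℝ) := Nat.cast_nonneg l
    linarith
  have harg : (N : ℝ) / 2 - 1 + (l + 1 : ℕ) = ((N : ℝ) / 2 - 1 + l) + 1 := by
    push_cast; ring
  rw [ultraI, ultraI, harg]
  exact mul_le_mul_of_nonneg_left (main _ hν x hx) (Real.rpow_nonneg hx.le _)
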